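/- Let G be a finite triangle-free graph that is flapless, let H be a hole of length at least 6 in G, let Φ be an H-flare in G, let h, h' ∈ V(H) be distinct and non-adjacent, let x ∈ Φ[h], and suppose x and h' have two distinct common neighbors z, z' ∈ V(G) \ V(H). Then there are vertices y, y' ∈ V(H) such that x, y, h', y' are all distinct, xy and h'y' are edges of G, and the sets {x, y} and {h', y'} are anticomplete in G. -/

import Mathlib

open SimpleGraph

/-- A `4`-sunspot in `G`: seven pairwise distinct vertices whose induced edge set is exactly
`{x₁x₂, x₂x₃, x₃x₄, x₄x₁, x₁y₁, x₂y₂, x₃y₃}`. -/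
def IsFourSunspot {V : Type} (G : SimpleGraph V) (x₁ x₂ x₃ x₄ y₁ y₂ y₃ : V) : Prop :=
  [x₁, x₂, x₃, x₄, y₁, y₂, y₃].Nodup ∧
  G.Adj x₁ x₂ ∧ G.Adj x₂ x₃ ∧ G.Adj x₃ x₄ ∧ G.Adj x₄ x₁ ∧
  G.Adj x₁ y₁ ∧ G.Adj x₂ y₂ ∧ G.Adj x₃ y₃ ∧
  ¬ G.Adj x₁ x₃ ∧ ¬ G.Adj x₂ x₄ ∧
  ¬ G.Adj x₁ y₂ ∧ ¬ G.Adj x₁ y₃ ∧ ¬ G.Adj x₂ y₁ ∧ ¬ G.Adj x₂ y₃ ∧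
  ¬ G.Adj x₃ y₁ ∧ ¬ G.Adj x₃ y₂ ∧ ¬ G.Adj x₄ y₁ ∧ ¬ G.Adj x₄ y₂ ∧ ¬ G.Adj x₄ y₃ ∧
  ¬ G.Adj y₁ y₂ ∧ ¬ G.Adj y₁ y₃ ∧ ¬ G.Adj y₂ y₃

/-- `G` is `4`-sunspot-free if there is no `4`-sunspot in `G`. -/
def FourSunspotFree {V : Type} (G : SimpleGraph V) : Prop :=
  ∀ x₁ x₂ x₃ x₄ y₁ y₂ y₃ : V, ¬ IsFourSunspot G x₁ x₂ x₃ x₄ y₁ y₂ y₃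

/-- The `t`-sun: a `t`-vertex cycle (on `Sum.inl` vertices) together with a pendant
(degree-one) neighbor `Sum.inr i` for each cycle vertex `Sum.inl i`. -/
def Sun (t : ℕ) : SimpleGraph (ZMod t ⊕ ZMod t) :=
  SimpleGraph.fromEdgeSet
    ((Set.range fun i : ZMod t => s(Sum.inl i, Sum.inl (i + 1))) ∪
     (Set.range fun i : ZMod t => s(Sum.inl i, Sum.inr i)))

/-- `G` is `t`-sun-free: no induced subgraph of `G` is a `t`-sun. -/
def SunFree (t : ℕ) {V : Type} (G : SimpleGraph V) : Prop :=
  IsEmpty (Sun t ↪g G)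

/-- The bull: a triangle `0,1,2` with pendant vertices `3` (adjacent to `0`)
and `4` (adjacent to `1`). -/
def Bull : SimpleGraph (Fin 5) :=
  SimpleGraph.fromEdgeSet {s(0, 1), s(1, 2), s(0, 2), s(0, 3), s(1, 4)}

/-- `G` is bull-free: no induced subgraph of `G` is a bull. -/
def BullFree {V : Type} (G : SimpleGraph V) : Prop :=
  IsEmpty (Bull ↪g G)

/-- A hole in `G`: an induced cycle on at least `4` vertices, given as a graph embedding
of the cycle graph. -/
structure Hole {V : Type} (G : SimpleGraph V) where
  len : ℕ
  four_le : 4 ≤ len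
  emb : SimpleGraph.cycleGraph len ↪g G

/-- The vertex set of a hole. -/
def Hole.verts {V : Type} {G : SimpleGraph V} (H : Hole G) : Set V :=
  Set.range H.emb

/-- The edge set of a hole. -/
def Hole.edges {V : Type} {G : SimpleGraph V} (H : Hole G) : Set (Sym2 V) :=
  {e | ∃ i j : Fin H.len, (SimpleGraph.cycleGraph H.len).Adj i j ∧ e = s(H.emb i, H.emb j)}

/-- `G` is liberal: for distinct non-adjacent `x, y`, neither dominates the other. -/
def Liberal {V : Type} (G : SimpleGraph V) : Prop :=
  ∀ x y : V, x ≠ y → ¬ G.Adj x y →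
    (G.neighborSet x \ G.neighborSet y).Nonempty ∧
    (G.neighborSet y \ G.neighborSet x).Nonempty

/-- `G` is non-degenerate: every vertex has degree at least `χ(G) - 1`. -/
def NonDegenerate {V : Type} (G : SimpleGraph V) : Prop :=
  ∀ v : V, G.chromaticNumber ≤ ((G.neighborSet v).ncard : ℕ∞) + 1

/-- `G` is flapless: for every hole `H` of length at least `6` in `G`, there is no `H`-flap,
i.e. no `4`-hole sharing an edge with `H`. -/
def Flapless {V : Type} (G : SimpleGraph V) : Prop :=
  ∀ H : Hole G, 6 ≤ H.len → ∀ F : Hole G, F.len = 4 → ∀ e ∈ F.edges, e ∉ H.edges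

/-- An `r`-leveling in `G`: pairwise disjoint nonempty sets `L 0, …, L r` such that every
vertex of `L i` (`i ≥ 1`) has a neighbor in `L (i-1)`, and edges only join consecutive levels. -/
def IsLeveling {V : Type} (G : SimpleGraph V) (r : ℕ) (L : ℕ → Set V) : Prop :=
  (∀ i, i ≤ r → (L i).Nonempty) ∧
  (∀ i j, i ≤ r → j ≤ r → i ≠ j → Disjoint (L i) (L j)) ∧
  (∀ i, 1 ≤ i → i ≤ r → ∀ v ∈ L i, ∃ u ∈ L (i - 1), G.Adj u v) ∧
  (∀ i j, i ≤ r → j ≤ r → i ≠ j →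
    ∀ u ∈ L i, ∀ v ∈ L j, G.Adj u v → i = j + 1 ∨ j = i + 1)

/-- `x` has no sector of length at most `2` in the hole `H`: there is no edge of `H` with both
ends adjacent to `x`, and no path of length `2` in `H` whose ends are adjacent to `x` and whose
middle vertex is not. -/
def NoSectorLenLe2 {V : Type} (G : SimpleGraph V) (H : Hole G) (x : V) : Prop :=
  (∀ i j : Fin H.len, (SimpleGraph.cycleGraph H.len).Adj i j →
      ¬ (G.Adj x (H.emb i) ∧ G.Adj x (H.emb j))) ∧
  (∀ i j k : Fin H.len, (SimpleGraph.cycleGraph H.len).Adj i j →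
      (SimpleGraph.cycleGraph H.len).Adj j k → i ≠ k →
      ¬ (G.Adj x (H.emb i) ∧ ¬ G.Adj x (H.emb j) ∧ G.Adj x (H.emb k)))

/-- `X` and `Y` are anticomplete in `G`: disjoint, with no edge between them. -/
def Anticomplete {V : Type} (G : SimpleGraph V) (X Y : Set V) : Prop :=
  Disjoint X Y ∧ ∀ x ∈ X, ∀ y ∈ Y, ¬ G.Adj x y

/-- An `H`-flare in `G`: to each vertex `H.emb i` of the hole `H`, assign a set `Φ i` of at
most one vertex, contained in the neighborhood of `H.emb i` and disjoint from `H`. -/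
structure IsFlare {V : Type} (G : SimpleGraph V) (H : Hole G) (Φ : Fin H.len → Set V) : Prop where
  subset_nbhd : ∀ i, Φ i ⊆ G.neighborSet (H.emb i) \ H.verts
  subsingleton : ∀ i, (Φ i).Subsingleton

/-- A flare is full if `|Φ i| = 1` for every `i`. -/
def IsFullFlare {V : Type} (G : SimpleGraph V) (H : Hole G) (Φ : Fin H.len → Set V) : Prop :=
  IsFlare G H Φ ∧ ∀ i, (Φ i).Nonempty

/-- A flare `Φ` is `d`-safe: for distinct hole vertices at distance at most `d` in `H`,
`Φ(h)` and `Φ[h'] = Φ(h') ∪ {h'}` are anticomplete in `G`. -/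
def DSafe {V : Type} (G : SimpleGraph V) (H : Hole G) (Φ : Fin H.len → Set V) (d : ℕ) : Prop :=
  ∀ i j : Fin H.len, i ≠ j → (SimpleGraph.cycleGraph H.len).dist i j ≤ d →
    Anticomplete G (Φ i) (Φ j ∪ {H.emb j})


private lemma tri_free {V : Type} {G : SimpleGraph V} (h : G.CliqueFree 3)
    {a b c : V} (hab : G.Adj a b) (hac : G.Adj a c) (hbc : G.Adj b c) : False := by
  classical
  exact h {a, b, c} (SimpleGraph.is3Clique_triple_iff.mpr ⟨hab, hac, hbc⟩)

private lemma val_one6 {n : ℕ} [NeZero n] (hn : 6 ≤ n) : (1 : Fin n).val = 1 := by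
  rw [Fin.val_one']
  exact Nat.mod_eq_of_lt (by omega)

private lemma one_ne_zero6 {n : ℕ} [NeZero n] (hn : 6 ≤ n) : (1 : Fin n) ≠ 0 := by
  intro h
  have h1 := val_one6 hn
  rw [h, Fin.val_zero] at h1
  exact absurd h1 (by omega)

private lemma four_ne_zero6 {n : ℕ} [NeZero n] (hn : 6 ≤ n) : ((1 : Fin n) + 1 + 1 + 1) ≠ 0 := by
  intro h
  have v2 : ((1 : Fin n) + 1).val = 2 := by
    rw [Fin.val_add, val_one6 hn]; exact Nat.mod_eq_of_lt (by omega)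
  have v3 : ((1 : Fin n) + 1 + 1).val = 3 := by
    rw [Fin.val_add, v2, val_one6 hn]; exact Nat.mod_eq_of_lt (by omega)
  have v4 : ((1 : Fin n) + 1 + 1 + 1).val = 4 := by
    rw [Fin.val_add, v3, val_one6 hn]; exact Nat.mod_eq_of_lt (by omega)
  rw [h, Fin.val_zero] at v4
  exact absurd v4 (by omega)

private lemma cyc_adj_iff {n : ℕ} [NeZero n] (hn : 6 ≤ n) (u v : Fin n) :
    (SimpleGraph.cycleGraph n).Adj u v ↔ u = v + 1 ∨ v = u + 1 := by
  have key : ∀ a b : Fin n, (a - b).val = 1 ↔ a = b + 1 := by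
    intro a b
    constructor
    · intro h
      have h2 : a - b = 1 := Fin.ext (by rw [h, val_one6 hn])
      rw [sub_eq_iff_eq_add] at h2
      rw [h2, add_comm]
    · intro h
      subst h
      rw [add_sub_cancel_left]
      exact val_one6 hn
  rw [SimpleGraph.cycleGraph_adj', key u v, key v u]

private lemma flap_lemma {V : Type} {G : SimpleGraph V}
    (htri : G.CliqueFree 3) (hflap : Flapless G)
    (H : Hole G) (hHlen : 6 ≤ H.len)
    {x z : V} {j w : Fin H.len}
    (hzH : z ∉ H.verts)
    (hxz : G.Adj x z) (hjz : G.Adj (H.emb j) z)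
    (hxj : ¬ G.Adj x (H.emb j)) (hxnej : x ≠ H.emb j)
    (hjw : (SimpleGraph.cycleGraph H.len).Adj j w) :
    ¬ G.Adj x (H.emb w) := by
  intro hxw
  have hjwG : G.Adj (H.emb j) (H.emb w) := H.emb.map_rel_iff.mpr hjw
  have hzw : ¬ G.Adj z (H.emb w) := fun h => tri_free htri h hjz.symm hjwG.symm
  have d_xz : x ≠ z := hxz.ne
  have d_xw : x ≠ H.emb w := hxw.ne
  have d_zj : z ≠ H.emb j := fun h => hzH ⟨j, h.symm⟩
  have d_zw : z ≠ H.emb w := fun h => hzH ⟨w, h.symm⟩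
  have d_jw : H.emb j ≠ H.emb w := hjwG.ne
  set f : Fin 4 → V := ![x, z, H.emb j, H.emb w] with hf
  have hf0 : f 0 = x := rfl
  have hf1 : f 1 = z := rfl
  have hf2 : f 2 = H.emb j := rfl
  have hf3 : f 3 = H.emb w := rfl
  have hinj : Function.Injective f := by
    intro a b hab
    fin_cases a <;> fin_cases b <;>
      simp_all [hf0, hf1, hf2, hf3] <;>
      first
        | rfl
        | exact absurd hab d_xz | exact absurd hab.symm d_xz
        | exact absurd hab d_xw | exact absurd hab.symm d_xw
        | exact absurd hab hxnej | exact absurd hab.symm hxnej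
        | exact absurd hab d_zj | exact absurd hab.symm d_zj
        | exact absurd hab d_zw | exact absurd hab.symm d_zw
        | exact absurd hab d_jw | exact absurd hab.symm d_jw
  have hrel : ∀ a b : Fin 4, G.Adj (f a) (f b) ↔ (SimpleGraph.cycleGraph 4).Adj a b := by
    have a01 : G.Adj (f 0) (f 1) := hxz
    have a12 : G.Adj (f 1) (f 2) := hjz.symm
    have a23 : G.Adj (f 2) (f 3) := hjwG
    have a30 : G.Adj (f 3) (f 0) := hxw.symm
    have n02 : ¬ G.Adj (f 0) (f 2) := hxj
    have n13 : ¬ G.Adj (f 1) (f 3) := hzw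
    intro a b
    fin_cases a <;> fin_cases b <;>
      first
        | exact iff_of_false (G.irrefl) (by decide)
        | exact iff_of_true (by assumption) (by decide)
        | exact iff_of_true (by exact (by assumption : G.Adj _ _).symm) (by decide)
        | exact iff_of_false (by assumption) (by decide)
        | exact iff_of_false (fun h => (by assumption : ¬ G.Adj _ _) h.symm) (by decide)
  let F : Hole G := ⟨4, le_refl 4, ⟨⟨f, hinj⟩, fun {a b} => hrel a b⟩⟩
  have hedge : s(H.emb j, H.emb w) ∈ F.edges :=
    ⟨2, 3, (by decide : (SimpleGraph.cycleGraph 4).Adj 2 3), rfl⟩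
  exact hflap H hHlen F rfl _ hedge ⟨j, w, hjw, rfl⟩

/-- Let `G` be a finite triangle-free flapless graph, `H` a hole of length at
least `6`, `Φ` an `H`-flare, `h = H.emb i` and `h' = H.emb j` distinct non-adjacent vertices
of `H`, `x ∈ Φ[h]`, and suppose `x, h'` have two distinct common neighbors `z, z' ∉ V(H)`.
Then there are `y, y' ∈ V(H)` such that `x, y, h', y'` are all distinct, `xy, h'y' ∈ E(G)`,
and `{x, y}` and `{h', y'}` are anticomplete in `G`. -/
theorem stmt_14 {V : Type} [Fintype V] (G : SimpleGraph V)
    (htri : G.CliqueFree 3)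
    (hflap : Flapless G)
    (H : Hole G) (hHlen : 6 ≤ H.len)
    (Φ : Fin H.len → Set V) (hΦ : IsFlare G H Φ)
    (i j : Fin H.len) (hij : i ≠ j)
    (x : V) (hx : x ∈ Φ i ∪ {H.emb i})
    (hnadj : ¬ G.Adj (H.emb i) (H.emb j))
    (z z' : V) (hzz' : z ≠ z') (hz : z ∉ H.verts) (hz' : z' ∉ H.verts)
    (hz1 : G.Adj x z) (hz2 : G.Adj (H.emb j) z)
    (hz'1 : G.Adj x z') (hz'2 : G.Adj (H.emb j) z') :
    ∃ y y' : V, y ∈ H.verts ∧ y' ∈ H.verts ∧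
      [x, y, H.emb j, y'].Nodup ∧
      G.Adj x y ∧ G.Adj (H.emb j) y' ∧
      Anticomplete G {x, y} {H.emb j, y'} := by
  haveI : NeZero H.len := ⟨by omega⟩
  have hinj := H.emb.injective
  have hmap : ∀ a b : Fin H.len,
      G.Adj (H.emb a) (H.emb b) ↔ (SimpleGraph.cycleGraph H.len).Adj a b :=
    fun a b => H.emb.map_rel_iff
  have hone := one_ne_zero6 hHlen
  have hsucc_ne : ∀ a : Fin H.len, a ≠ a + 1 := by
    intro a h
    have h2 : a + 0 = a + 1 := by rw [add_zero]; exact h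
    exact hone (add_left_cancel h2).symm
  -- i is not a cycle-neighbor of j
  have hnadj_cyc : ¬ (SimpleGraph.cycleGraph H.len).Adj i j := fun h => hnadj ((hmap i j).mpr h)
  have hij1 : i ≠ j + 1 := by
    intro h; exact hnadj_cyc ((cyc_adj_iff hHlen i j).mpr (Or.inl h))
  have hij2 : j ≠ i + 1 := by
    intro h; exact hnadj_cyc ((cyc_adj_iff hHlen i j).mpr (Or.inr h))
  -- x is nonadjacent to and distinct from H.emb j
  have hxadjj : ¬ G.Adj x (H.emb j) := fun h => tri_free htri h hz1 hz2
  have hxnej : x ≠ H.emb j := by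
    rcases hx with hx | hx
    · exact fun h => ((hΦ.subset_nbhd i hx).2) (h ▸ ⟨j, rfl⟩)
    · rw [Set.mem_singleton_iff] at hx
      subst hx
      exact fun h => hij (hinj h)
  have step1 : ∀ w : Fin H.len, (SimpleGraph.cycleGraph H.len).Adj j w →
      ¬ G.Adj x (H.emb w) :=
    fun w hw => flap_lemma htri hflap H hHlen hz hz1 hz2 hxadjj hxnej hw
  have adj_j_jp1 : (SimpleGraph.cycleGraph H.len).Adj j (j + 1) :=
    (cyc_adj_iff hHlen j (j + 1)).mpr (Or.inr rfl)
  have adj_j_jm1 : (SimpleGraph.cycleGraph H.len).Adj j (j - 1) :=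
    (cyc_adj_iff hHlen j (j - 1)).mpr (Or.inl (by rw [sub_add_cancel]))
  rcases hx with hx | hx
  · -- Case A : x ∈ Φ i, take y = H.emb i
    have hxH : x ∉ H.verts := (hΦ.subset_nbhd i hx).2
    have hxi : G.Adj x (H.emb i) := ((hΦ.subset_nbhd i hx).1 : G.Adj (H.emb i) x).symm
    have hxne : ∀ a : Fin H.len, x ≠ H.emb a := fun a h => hxH (h ▸ ⟨a, rfl⟩)
    -- choose k ∈ {j+1, j-1} with i not cycle-adjacent to k and i ≠ k
    obtain ⟨k, hjk, hik_ne, hik_nadj⟩ :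
        ∃ k : Fin H.len, (SimpleGraph.cycleGraph H.len).Adj j k ∧ i ≠ k ∧
          ¬ (SimpleGraph.cycleGraph H.len).Adj i k := by
      by_cases hc : i = j + 1 + 1
      · refine ⟨j - 1, adj_j_jm1, ?_, ?_⟩
        · intro h
          exact hij2 (eq_sub_iff_add_eq.mp h).symm
        · intro h
          rcases (cyc_adj_iff hHlen i (j - 1)).mp h with h' | h'
          · rw [sub_add_cancel] at h'; exact hij h'
          · rw [hc] at h'
            have h2 : j = j + 1 + 1 + 1 + 1 := sub_eq_iff_eq_add.mp h'
            have h3 : j + 0 = j + (1 + 1 + 1 + 1) := by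
              rw [add_zero]
              calc j = j + 1 + 1 + 1 + 1 := h2
                _ = j + (1 + 1 + 1 + 1) := by simp only [add_assoc]
            exact four_ne_zero6 hHlen (add_left_cancel h3).symm
      · refine ⟨j + 1, adj_j_jp1, hij1, ?_⟩
        intro h
        rcases (cyc_adj_iff hHlen i (j + 1)).mp h with h' | h'
        · exact hc h'
        · exact hij (add_right_cancel h'.symm)
    have hxk : ¬ G.Adj x (H.emb k) := step1 k hjk
    have hik : ¬ G.Adj (H.emb i) (H.emb k) := fun h => hik_nadj ((hmap i k).mp h)
    have hjk_ne : j ≠ k := hjk.ne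
    refine ⟨H.emb i, H.emb k, ⟨i, rfl⟩, ⟨k, rfl⟩, ?_, hxi, (hmap j k).mpr hjk, ?_, ?_⟩
    · simp only [List.nodup_cons, List.mem_cons, List.not_mem_nil, or_false,
        List.mem_singleton, List.nodup_nil, and_true]
      refine ⟨?_, ?_, ?_⟩
      · push_neg
        exact ⟨hxne i, hxnej, hxne k⟩
      · push_neg
        exact ⟨fun h => hij (hinj h), fun h => hik_ne (hinj h)⟩
      · exact ⟨fun h => hjk_ne (hinj h), not_false⟩
    · rw [Set.disjoint_left]
      rintro a (rfl | rfl) hb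
      · rcases hb with rfl | hb
        · exact hxnej rfl
        · rw [Set.mem_singleton_iff] at hb
          exact hxne k hb
      · rcases hb with hb | hb
        · exact hij (hinj hb)
        · rw [Set.mem_singleton_iff] at hb
          exact hik_ne (hinj hb)
    · rintro a (rfl | ha) b (rfl | hb)
      · exact hxadjj
      · rw [Set.mem_singleton_iff] at hb; subst hb; exact hxk
      · rw [Set.mem_singleton_iff] at ha; subst ha; exact hnadj
      · rw [Set.mem_singleton_iff] at ha hb; subst ha; subst hb; exact hik
  · -- Case B : x = H.emb i, take y = H.emb (i-1), y' = H.emb (j-1)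
    rw [Set.mem_singleton_iff] at hx
    subst hx
    have step1' : ∀ w : Fin H.len, (SimpleGraph.cycleGraph H.len).Adj i w →
        ¬ G.Adj (H.emb j) (H.emb w) :=
      fun w hw => flap_lemma htri hflap H hHlen hz hz2 hz1
        (fun h => hnadj h.symm) (fun h => hij (hinj h.symm)) hw
    have adj_i_im1 : (SimpleGraph.cycleGraph H.len).Adj i (i - 1) :=
      (cyc_adj_iff hHlen i (i - 1)).mpr (Or.inl (by rw [sub_add_cancel]))
    have sub_ne : ∀ a : Fin H.len, a ≠ a - 1 := fun a h =>
      hsucc_ne a (eq_sub_iff_add_eq.mp h).symm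
    have him1_j : i - 1 ≠ j := fun h => hij1 (sub_eq_iff_eq_add.mp h)
    have hi_jm1 : i ≠ j - 1 := fun h => hij2 (eq_sub_iff_add_eq.mp h).symm
    have him1_jm1 : i - 1 ≠ j - 1 := fun h => hij (sub_left_inj.mp h)
    have hnadj_m1 : ¬ (SimpleGraph.cycleGraph H.len).Adj (i - 1) (j - 1) := by
      intro h
      rcases (cyc_adj_iff hHlen (i - 1) (j - 1)).mp h with h' | h'
      · rw [sub_add_cancel] at h'
        exact him1_j h'
      · rw [sub_add_cancel] at h'
        exact hi_jm1 h'.symm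
    have hGim1 : G.Adj (H.emb i) (H.emb (i - 1)) := (hmap _ _).mpr adj_i_im1
    have hGjm1 : G.Adj (H.emb j) (H.emb (j - 1)) := (hmap _ _).mpr adj_j_jm1
    have hx_jm1 : ¬ G.Adj (H.emb i) (H.emb (j - 1)) := step1 (j - 1) adj_j_jm1
    have hj_im1 : ¬ G.Adj (H.emb j) (H.emb (i - 1)) := step1' (i - 1) adj_i_im1
    have him1_jm1G : ¬ G.Adj (H.emb (i - 1)) (H.emb (j - 1)) :=
      fun h => hnadj_m1 ((hmap _ _).mp h)
    refine ⟨H.emb (i - 1), H.emb (j - 1), ⟨i - 1, rfl⟩, ⟨j - 1, rfl⟩, ?_, hGim1, hGjm1, ?_, ?_⟩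
    · simp only [List.nodup_cons, List.mem_cons, List.not_mem_nil, or_false,
        List.mem_singleton, List.nodup_nil, and_true]
      refine ⟨?_, ?_, ?_⟩
      · push_neg
        exact ⟨fun h => sub_ne i (hinj h), fun h => hij (hinj h),
          fun h => hi_jm1 (hinj h)⟩
      · push_neg
        exact ⟨fun h => him1_j (hinj h), fun h => him1_jm1 (hinj h)⟩
      · exact ⟨fun h => sub_ne j (hinj h), not_false⟩
    · rw [Set.disjoint_left]
      rintro a (rfl | ha) hb
      · rcases hb with hb | hb
        · exact hij (hinj hb)
        · rw [Set.mem_singleton_iff] at hb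
          exact hi_jm1 (hinj hb)
      · rw [Set.mem_singleton_iff] at ha
        subst ha
        rcases hb with hb | hb
        · exact him1_j (hinj hb)
        · rw [Set.mem_singleton_iff] at hb
          exact him1_jm1 (hinj hb)
    · rintro a (rfl | ha) b (rfl | hb)
      · exact hnadj
      · rw [Set.mem_singleton_iff] at hb; subst hb; exact hx_jm1
      · rw [Set.mem_singleton_iff] at ha; subst ha
        exact fun h => hj_im1 h.symm
      · rw [Set.mem_singleton_iff] at ha hb; subst ha; subst hb; exact him1_jm1G
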